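/- The natural map from the quotient of the monoid ring ℤ[2^ℕ] by the ideal I generated by {χ_{A⊔B} − χ_A − χ_B : A, B ⊆ ℕ disjoint} onto the subring 𝒫 = span{diag(χ_A) : A ⊆ ℕ} of ℓ^∞-diagonal matrices is a ring isomorphism; i.e., ℤ[2^ℕ]/I ≅ 𝒫. -/

import Mathlib

/-- The monoid `2^ℕ` of subsets of `ℕ` under intersection. -/
def SetMon : Type := Set ℕ

instance : CommMonoid SetMon where
  mul A B := (Set.inter (A : Set ℕ) (B : Set ℕ) : Set ℕ)
  one := (Set.univ : Set ℕ)
  mul_assoc a b c := Set.inter_assoc a b c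
  one_mul a := Set.univ_inter a
  mul_one a := Set.inter_univ a
  mul_comm a b := Set.inter_comm a b

/-- The basis element `χ_A` of the monoid ring `ℤ[2^ℕ]`. -/
noncomputable def chi (A : Set ℕ) : MonoidAlgebra ℤ SetMon :=
  MonoidAlgebra.single (A : SetMon) 1

/-- The generators `χ_{A⊔B} - χ_A - χ_B` (for `A, B` disjoint) of the ideal `I`. -/
def IGens : Set (MonoidAlgebra ℤ SetMon) :=
  {x | ∃ A B : Set ℕ, Disjoint A B ∧
    x = chi (A ∪ B) - chi A - chi B}

/-- The subring `𝒫` of `ℤ^ℕ` generated by the characteristic functions. -/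
def PRing : Subring (ℕ → ℤ) :=
  Subring.closure {f | ∃ A : Set ℕ, f = A.indicator (fun _ => (1 : ℤ))}

def toSet (A : SetMon) : Set ℕ := A

lemma toSet_mul (A B : SetMon) : toSet (A * B) = toSet A ∩ toSet B := rfl
lemma toSet_one : toSet 1 = Set.univ := rfl

noncomputable def phi0 : SetMon →* (ℕ → ℤ) where
  toFun A := Set.indicator (toSet A) (fun _ => (1 : ℤ))
  map_one' := by
    funext n
    simp [toSet_one, Set.indicator_apply]
  map_mul' A B := by
    funext n
    show Set.indicator (toSet (A*B)) (fun _ => (1:ℤ)) n = Set.indicator (toSet A) (fun _ => (1:ℤ)) n * Set.indicator (toSet B) (fun _ => (1:ℤ)) n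
    rw [toSet_mul]
    by_cases hA : n ∈ toSet A <;> by_cases hB : n ∈ toSet B <;>
      simp [Set.indicator_apply, Set.mem_inter_iff, hA, hB]

noncomputable def Phi : MonoidAlgebra ℤ SetMon →+* (ℕ → ℤ) :=
  (MonoidAlgebra.lift ℤ (ℕ → ℤ) SetMon phi0).toRingHom

lemma Phi_chi (A : Set ℕ) : Phi (chi A) = A.indicator (fun _ => (1 : ℤ)) := by
  show (MonoidAlgebra.lift ℤ (ℕ → ℤ) SetMon phi0) (MonoidAlgebra.single _ 1) = _
  rw [MonoidAlgebra.lift_single phi0 A 1]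
  simp [phi0]
  rfl

noncomputable abbrev KI : Ideal (MonoidAlgebra ℤ SetMon) := Ideal.span IGens
noncomputable abbrev mkK : MonoidAlgebra ℤ SetMon →+* (MonoidAlgebra ℤ SetMon ⧸ KI) :=
  Ideal.Quotient.mk KI

lemma mkK_chi_empty : mkK (chi ∅) = 0 := by
  rw [Ideal.Quotient.eq_zero_iff_mem]
  have h : -(chi ∅) ∈ KI := by
    apply Ideal.subset_span
    refine ⟨∅, ∅, disjoint_bot_left, ?_⟩
    rw [Set.union_empty]; ring
  simpa using neg_mem h

lemma mkK_chi_union {A B : Set ℕ} (h : Disjoint A B) :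
    mkK (chi (A ∪ B)) = mkK (chi A) + mkK (chi B) := by
  have hmem : chi (A ∪ B) - chi A - chi B ∈ KI :=
    Ideal.subset_span ⟨A, B, h, rfl⟩
  have h0 := (Ideal.Quotient.eq_zero_iff_mem).2 hmem
  rw [map_sub, map_sub, sub_sub, sub_eq_zero] at h0
  exact h0

lemma mkK_chi_biUnion {ι : Type*} (s : Finset ι) (f : ι → Set ℕ)
    (h : ∀ i ∈ s, ∀ j ∈ s, i ≠ j → Disjoint (f i) (f j)) :
    mkK (chi (⋃ i ∈ s, f i)) = ∑ i ∈ s, mkK (chi (f i)) := by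
  classical
  induction s using Finset.induction_on with
  | empty =>
    have he : (⋃ i ∈ (∅ : Finset ι), f i) = ∅ := by simp
    rw [he, Finset.sum_empty, mkK_chi_empty]
  | @insert a s ha ih =>
    rw [Finset.set_biUnion_insert]
    have hdisj : Disjoint (f a) (⋃ i ∈ s, f i) := by
      rw [Set.disjoint_iUnion_right]
      intro i
      rw [Set.disjoint_iUnion_right]
      intro hi
      exact h a (Finset.mem_insert_self a s) i (Finset.mem_insert_of_mem hi)
        (fun hai => ha (hai ▸ hi))
    rw [mkK_chi_union hdisj, Finset.sum_insert ha,
      ih (fun i hi j hj hij => h i (Finset.mem_insert_of_mem hi) j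
        (Finset.mem_insert_of_mem hj) hij)]

def cellOf (s σ : Finset SetMon) : Set ℕ := {n | ∀ A ∈ s, (n ∈ toSet A ↔ A ∈ σ)}

lemma mem_cellOf {s σ : Finset SetMon} {n : ℕ} :
    n ∈ cellOf s σ ↔ ∀ A ∈ s, (n ∈ toSet A ↔ A ∈ σ) := Iff.rfl

lemma mem_span_of_Phi_eq_zero (x : MonoidAlgebra ℤ SetMon) (hx : Phi x = 0) :
    x ∈ KI := by
  classical
  rw [← Ideal.Quotient.eq_zero_iff_mem]
  set s : Finset SetMon := x.coeff.support with hs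
  have hcover : ∀ A ∈ s, toSet A = ⋃ σ ∈ s.powerset.filter (A ∈ ·), cellOf s σ := by
    intro A hA
    ext n
    constructor
    · intro hn
      refine Set.mem_biUnion (show s.filter (fun B => n ∈ toSet B) ∈
          s.powerset.filter (A ∈ ·) from ?_) ?_
      · rw [Finset.mem_filter, Finset.mem_powerset]
        exact ⟨Finset.filter_subset _ _, Finset.mem_filter.2 ⟨hA, hn⟩⟩
      · intro B hB
        simp [Finset.mem_filter, hB]
    · intro hn
      rcases Set.mem_iUnion₂.1 hn with ⟨σ, hσ, hnσ⟩
      rw [Finset.mem_filter] at hσ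
      exact (mem_cellOf.1 hnσ A hA).2 hσ.2
  have hdisj : ∀ σ ∈ s.powerset, ∀ τ ∈ s.powerset, σ ≠ τ →
      Disjoint (cellOf s σ) (cellOf s τ) := by
    intro σ hσ τ hτ hne
    rw [Finset.mem_powerset] at hσ hτ
    rw [Set.disjoint_left]
    intro n hnσ hnτ
    apply hne
    ext B
    constructor
    · intro hB
      exact (mem_cellOf.1 hnτ B (hσ hB)).1 ((mem_cellOf.1 hnσ B (hσ hB)).2 hB)
    · intro hB
      exact (mem_cellOf.1 hnσ B (hτ hB)).1 ((mem_cellOf.1 hnτ B (hτ hB)).2 hB)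
  have hchiA : ∀ A ∈ s, mkK (chi (toSet A)) =
      ∑ σ ∈ s.powerset.filter (A ∈ ·), mkK (chi (cellOf s σ)) := by
    intro A hA
    rw [hcover A hA]
    exact mkK_chi_biUnion _ _ (fun σ hσ τ hτ h =>
      hdisj σ (Finset.mem_filter.1 hσ).1 τ (Finset.mem_filter.1 hτ).1 h)
  have hx_expand : x = ∑ A ∈ s, (x.coeff A) • chi (toSet A) := by
    conv_lhs => rw [← MonoidAlgebra.sum_coeff_single x]
    rw [Finsupp.sum]
    refine Finset.sum_congr rfl fun A _ => ?_
    rw [chi]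
    refine Eq.trans ?_ (MonoidAlgebra.smul_single' (x.coeff A) A 1).symm
    rw [mul_one]
  have hmk : mkK x = ∑ σ ∈ s.powerset, (∑ A ∈ σ, x.coeff A) • mkK (chi (cellOf s σ)) := by
    calc mkK x = ∑ A ∈ s, (x.coeff A) • mkK (chi (toSet A)) := by
          conv_lhs => rw [hx_expand]
          rw [map_sum]
          simp only [map_zsmul]
    _ = ∑ A ∈ s, ∑ σ ∈ s.powerset.filter (A ∈ ·), (x.coeff A) • mkK (chi (cellOf s σ)) := by
          refine Finset.sum_congr rfl fun A hA => ?_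
          rw [hchiA A hA, Finset.smul_sum]
    _ = ∑ A ∈ s, ∑ σ ∈ s.powerset, if A ∈ σ then (x.coeff A) • mkK (chi (cellOf s σ)) else 0 := by
          refine Finset.sum_congr rfl fun A _ => ?_
          rw [Finset.sum_filter]
    _ = ∑ σ ∈ s.powerset, ∑ A ∈ s, if A ∈ σ then (x.coeff A) • mkK (chi (cellOf s σ)) else 0 :=
          Finset.sum_comm
    _ = ∑ σ ∈ s.powerset, (∑ A ∈ σ, x.coeff A) • mkK (chi (cellOf s σ)) := by
          refine Finset.sum_congr rfl fun σ hσ => ?_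
          rw [← Finset.sum_filter, ← Finset.sum_smul]
          congr 1
          rw [Finset.filter_mem_eq_inter, Finset.inter_eq_right.2 (Finset.mem_powerset.1 hσ)]
  rw [hmk]
  refine Finset.sum_eq_zero fun σ hσ => ?_
  by_cases hcs : cellOf s σ = ∅
  · rw [hcs, mkK_chi_empty, smul_zero]
  · obtain ⟨n, hn⟩ := Set.nonempty_iff_ne_empty.2 hcs
    have hv : Phi x n = ∑ A ∈ σ, x.coeff A := by
      have h1 : Phi x = ∑ A ∈ s, x.coeff A • phi0 A := by
        show (MonoidAlgebra.lift ℤ (ℕ → ℤ) SetMon phi0) x = _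
        rw [MonoidAlgebra.lift_apply, Finsupp.sum]
      calc Phi x n = ∑ A ∈ s, x.coeff A * Set.indicator (toSet A) (fun _ => (1:ℤ)) n := by
            rw [h1, Finset.sum_apply]
            rfl
      _ = ∑ A ∈ s, if A ∈ σ then x.coeff A else 0 := by
            refine Finset.sum_congr rfl fun A hA => ?_
            have hiff := mem_cellOf.1 hn A hA
            by_cases hAσ : A ∈ σ
            · simp [Set.indicator_apply, hAσ, hiff.2 hAσ]
            · have : n ∉ toSet A := fun hm => hAσ (hiff.1 hm)
              simp [Set.indicator_apply, hAσ, this]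
      _ = ∑ A ∈ σ, x.coeff A := by
            rw [Finset.sum_ite_mem, Finset.inter_eq_right.2 (Finset.mem_powerset.1 hσ)]
    rw [hx] at hv
    have hz : (∑ A ∈ σ, x.coeff A) = 0 := by rw [← hv]; rfl
    rw [hz, zero_smul]

lemma Phi_mem_PRing (x : MonoidAlgebra ℤ SetMon) : Phi x ∈ PRing := by
  classical
  induction x using MonoidAlgebra.induction_linear with
  | zero => rw [map_zero]; exact zero_mem _
  | add f g hf hg => rw [map_add]; exact add_mem hf hg
  | single A b =>
    have h1 : (MonoidAlgebra.single A b : MonoidAlgebra ℤ SetMon) = b • chi (toSet A) := by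
      rw [chi]; refine Eq.trans ?_ (MonoidAlgebra.smul_single' b A 1).symm; rw [mul_one]
    rw [h1, map_zsmul, Phi_chi]
    have hm : (toSet A).indicator (fun _ => (1:ℤ)) ∈
        {f : ℕ → ℤ | ∃ B : Set ℕ, f = B.indicator (fun _ => (1:ℤ))} := ⟨toSet A, rfl⟩
    exact zsmul_mem (Subring.subset_closure hm) b

lemma span_le_ker : ∀ y ∈ IGens, Phi y = 0 := by
  rintro y ⟨A, B, hAB, rfl⟩
  rw [map_sub, map_sub, Phi_chi, Phi_chi, Phi_chi,
    Set.indicator_union_of_disjoint hAB]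
  funext n
  simp

noncomputable def Phi' : MonoidAlgebra ℤ SetMon →+* PRing :=
  Phi.codRestrict PRing.toSubsemiring Phi_mem_PRing

lemma Phi'_surj : Function.Surjective Phi' := by
  intro y
  have hy : (y : ℕ → ℤ) ∈ Phi.range := by
    have hle : PRing ≤ Phi.range := by
      rw [PRing, Subring.closure_le]
      rintro f ⟨A, rfl⟩
      exact RingHom.mem_range.2 ⟨chi A, Phi_chi A⟩
    exact hle y.2
  obtain ⟨x, hxy⟩ := hy
  exact ⟨x, Subtype.ext hxy⟩

lemma ker_Phi' : RingHom.ker Phi' = KI := by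
  ext x
  constructor
  · intro hxk
    have hx : Phi x = 0 := by
      have := (RingHom.mem_ker).1 hxk
      exact congrArg Subtype.val this
    exact mem_span_of_Phi_eq_zero x hx
  · intro hxk
    rw [RingHom.mem_ker]
    apply Subtype.ext
    show Phi x = 0
    exact RingHom.mem_ker.1 (Ideal.span_le.2 (fun y hy => RingHom.mem_ker.2 (span_le_ker y hy)) hxk)

/-- the natural map `ℤ[2^ℕ]/I → 𝒫`, `χ_A ↦ χ_A`, is a ring
isomorphism. -/
theorem stmt15 :
    ∃ e : (MonoidAlgebra ℤ SetMon ⧸ Ideal.span IGens) ≃+* PRing,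
      ∀ A : Set ℕ,
        ((e (Ideal.Quotient.mk (Ideal.span IGens) (chi A)) : ℕ → ℤ)) =
          A.indicator (fun _ => (1 : ℤ)) := by
  refine ⟨(Ideal.quotEquivOfEq ker_Phi'.symm).trans
    (RingHom.quotientKerEquivOfSurjective Phi'_surj), fun A => ?_⟩
  have h1 : (Ideal.quotEquivOfEq ker_Phi'.symm) (Ideal.Quotient.mk (Ideal.span IGens) (chi A))
      = Ideal.Quotient.mk (RingHom.ker Phi') (chi A) := Ideal.quotEquivOfEq_mk _ _
  rw [RingEquiv.coe_trans, Function.comp_apply, h1]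
  have h2 : (RingHom.quotientKerEquivOfSurjective Phi'_surj)
      (Ideal.Quotient.mk (RingHom.ker Phi') (chi A)) = Phi' (chi A) := by
    simp [RingHom.quotientKerEquivOfSurjective]
  rw [h2]
  show Phi (chi A) = _
  exact Phi_chi A
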